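/- arXiv:math/0507602 — 6 statements merged into one kernel-verified Lean document; each statement's English description precedes it below -/
import Mathlib

section
/- Let δ_i : ℤF → ℤF denote Fox derivatives and, for w ∈ ℤF, write w(1) for the value of w under the augmentation. For any finite sequence of indices i_1, …, i_r ∈ {1, …, n} (repetitions allowed) and any group elements u, v ∈ F, the iterated Fox derivative of a product evaluated at 1 satisfies the product formula: δ_{i_1}…δ_{i_r}(uv)(1) = Σ_{k=0}^{r} δ_{i_1}…δ_{i_k}(u)(1) · δ_{i_{k+1}}…δ_{i_r}(v)(1), where an empty composite of Fox derivatives applied to a group element and evaluated at 1 is understood to be 1. -/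
open MonoidAlgebra

/-- `FG n` is the free group on `n` generators `x_1, …, x_n`. -/
abbrev FG (n : ℕ) : Type := FreeGroup (Fin n)

/-- `GR n` is the integral group ring `ℤF` of the free group on `n` generators. -/
abbrev GR (n : ℕ) : Type := MonoidAlgebra ℤ (FG n)

/-- Iterated application of Fox derivatives along a list of indices:
`foxIter δ [i₁, …, iᵣ] x = δ i₁ (δ i₂ (⋯ (δ iᵣ x)))`; the empty list gives `x` itself. -/
noncomputable def foxIter {n : ℕ} (δ : Fin n → (GR n →ₗ[ℤ] GR n)) : List (Fin n) → GR n → GR n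
  | [], x => x
  | i :: l, x => δ i (foxIter δ l x)

lemma fox_mul_general {n : ℕ} (δ : Fin n → (GR n →ₗ[ℤ] GR n))
    (hδ₃ : ∀ (i : Fin n) (u v : FG n),
      δ i (of ℤ (FG n) (u * v)) =
        δ i (of ℤ (FG n) u) + of ℤ (FG n) u * δ i (of ℤ (FG n) v))
    (ε : GR n →+* ℤ) (hε : ∀ g : FG n, ε (of ℤ (FG n) g) = 1)
    (i : Fin n) (u : FG n) (w : GR n) :
    δ i (of ℤ (FG n) u * w) = ε w • δ i (of ℤ (FG n) u) + of ℤ (FG n) u * δ i w := by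
  induction w using MonoidAlgebra.induction_on with
  | of g =>
      rw [← map_mul (of ℤ (FG n)), hδ₃, hε]
      simp
  | add x y hx hy =>
      rw [mul_add, map_add, hx, hy, map_add, map_add, mul_add, add_smul]
      abel
  | smul r x hx =>
      rw [mul_smul_comm, map_smul, hx, map_zsmul ε, map_smul, smul_add, smul_smul,
        mul_smul_comm, smul_eq_mul]

lemma foxIter_mul_general {n : ℕ} (δ : Fin n → (GR n →ₗ[ℤ] GR n))
    (hδ₃ : ∀ (i : Fin n) (u v : FG n),
      δ i (of ℤ (FG n) (u * v)) =
        δ i (of ℤ (FG n) u) + of ℤ (FG n) u * δ i (of ℤ (FG n) v))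
    (ε : GR n →+* ℤ) (hε : ∀ g : FG n, ε (of ℤ (FG n) g) = 1)
    (l : List (Fin n)) (u : FG n) (w : GR n) :
    foxIter δ l (of ℤ (FG n) u * w) = of ℤ (FG n) u * foxIter δ l w +
      ∑ k ∈ Finset.range l.length,
        ε (foxIter δ (l.drop (k+1)) w) • foxIter δ (l.take (k+1)) (of ℤ (FG n) u) := by
  induction l with
  | nil => simp [foxIter]
  | cons i l ih =>
      show δ i (foxIter δ l (of ℤ (FG n) u * w)) = _
      rw [ih, map_add, fox_mul_general δ hδ₃ ε hε, map_sum]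
      rw [List.length_cons, Finset.sum_range_succ']
      simp only [List.drop_succ_cons, List.take_succ_cons, List.drop_zero, List.take_zero,
        map_smul]
      show _ = of ℤ (FG n) u * δ i (foxIter δ l w) +
        ((∑ k ∈ Finset.range l.length,
          ε (foxIter δ (l.drop (k+1)) w) • δ i (foxIter δ (l.take (k+1)) (of ℤ (FG n) u))) +
          ε (foxIter δ l w) • δ i (of ℤ (FG n) u))
      abel

/-- Product formula for iterated Fox derivatives evaluated at `1` (repetitions of
indices allowed): `δ_{i₁}…δ_{iᵣ}(uv)(1) = Σₖ δ_{i₁}…δ_{iₖ}(u)(1) · δ_{iₖ₊₁}…δ_{iᵣ}(v)(1)`. -/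
theorem fox_derivative_iterated_product_formula (n : ℕ)
    (δ : Fin n → (GR n →ₗ[ℤ] GR n))
    (hδ₁ : ∀ i : Fin n, δ i (of ℤ (FG n) (FreeGroup.of i)) = 1)
    (hδ₂ : ∀ i j : Fin n, j ≠ i → δ i (of ℤ (FG n) (FreeGroup.of j)) = 0)
    (hδ₃ : ∀ (i : Fin n) (u v : FG n),
      δ i (of ℤ (FG n) (u * v)) =
        δ i (of ℤ (FG n) u) + of ℤ (FG n) u * δ i (of ℤ (FG n) v))
    (ε : GR n →+* ℤ)
    (hε : ∀ g : FG n, ε (of ℤ (FG n) g) = 1)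
    (l : List (Fin n)) (u v : FG n) :
    ε (foxIter δ l (of ℤ (FG n) (u * v))) =
      ∑ k ∈ Finset.range (l.length + 1),
        ε (foxIter δ (l.take k) (of ℤ (FG n) u)) *
          ε (foxIter δ (l.drop k) (of ℤ (FG n) v)) := by
  rw [map_mul (of ℤ (FG n)), foxIter_mul_general δ hδ₃ ε hε, map_add, map_mul, hε, map_sum,
    Finset.sum_range_succ']
  simp only [List.take_zero, List.drop_zero, zsmul_eq_mul, map_mul, map_intCast,
    Int.cast_id]
  show 1 * ε (foxIter δ l (of ℤ (FG n) v)) +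
      ∑ k ∈ Finset.range l.length,
        ε (foxIter δ (l.drop (k+1)) (of ℤ (FG n) v)) *
          ε (foxIter δ (l.take (k+1)) (of ℤ (FG n) u)) =
    (∑ k ∈ Finset.range l.length,
        ε (foxIter δ (l.take (k+1)) (of ℤ (FG n) u)) *
          ε (foxIter δ (l.drop (k+1)) (of ℤ (FG n) v))) +
      ε (foxIter δ [] (of ℤ (FG n) u)) * ε (foxIter δ l (of ℤ (FG n) v))
  rw [show ε (foxIter δ [] (of ℤ (FG n) u)) = 1 from hε u]
  rw [add_comm]
  congr 1
  exact Finset.sum_congr rfl fun k _ => mul_comm _ _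
end

section
/- (Key Fox calculus lemma.) Let i_1, …, i_r ∈ {1, …, n} be pairwise distinct indices, let 1 ≤ k ≤ r, let ε = ±1, and let u, v ∈ F be group elements. Then δ_{i_1}…δ_{i_r}(u · x_{i_k}^{ε} · v)(1) = ε · δ_{i_1}…δ_{i_{k-1}}(u)(1) · δ_{i_{k+1}}…δ_{i_r}(v)(1) + δ_{i_1}…δ_{i_r}(uv)(1), where an empty composite of Fox derivatives applied to a group element and evaluated at 1 is understood to be 1. -/
open MonoidAlgebra

/-- Key Fox calculus lemma: for pairwise distinct indices `i₁, …, iᵣ` (here the list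
`a ++ i :: b` with `i = iₖ`), `ζ = ±1`, and group elements `u, v`:
`δ_{i₁}…δ_{iᵣ}(u x_{iₖ}^ζ v)(1) = ζ · δ_{i₁}…δ_{iₖ₋₁}(u)(1) · δ_{iₖ₊₁}…δ_{iᵣ}(v)(1)
  + δ_{i₁}…δ_{iᵣ}(uv)(1)`. -/
theorem fox_calculus_key_lemma (n : ℕ)
    (δ : Fin n → (GR n →ₗ[ℤ] GR n))
    (hδ₁ : ∀ i : Fin n, δ i (of ℤ (FG n) (FreeGroup.of i)) = 1)
    (hδ₂ : ∀ i j : Fin n, j ≠ i → δ i (of ℤ (FG n) (FreeGroup.of j)) = 0)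
    (hδ₃ : ∀ (i : Fin n) (u v : FG n),
      δ i (of ℤ (FG n) (u * v)) =
        δ i (of ℤ (FG n) u) + of ℤ (FG n) u * δ i (of ℤ (FG n) v))
    (ε : GR n →+* ℤ)
    (hε : ∀ g : FG n, ε (of ℤ (FG n) g) = 1)
    (a b : List (Fin n)) (i : Fin n) (hnd : (a ++ i :: b).Nodup)
    (ζ : ℤ) (hζ : ζ = 1 ∨ ζ = -1) (u v : FG n) :
    ε (foxIter δ (a ++ i :: b) (of ℤ (FG n) (u * (FreeGroup.of i) ^ ζ * v))) =
      ζ * (ε (foxIter δ a (of ℤ (FG n) u)) * ε (foxIter δ b (of ℤ (FG n) v))) +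
        ε (foxIter δ (a ++ i :: b) (of ℤ (FG n) (u * v))) := by
  set O : FG n →* GR n := of ℤ (FG n) with hO
  set x : FG n := FreeGroup.of i with hx
  -- δ kills 1
  have hone : ∀ j : Fin n, δ j (O 1) = 0 := by
    intro j
    have h := hδ₃ j 1 1
    rw [mul_one, map_one, one_mul] at h
    exact (left_eq_add.mp h)
  -- inverse rule
  have hinv : ∀ (j : Fin n) (w : FG n),
      δ j (O w⁻¹) = - (O w⁻¹ * δ j (O w)) := by
    intro j w
    have h := hδ₃ j w⁻¹ w
    rw [inv_mul_cancel, hone j] at h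
    exact eq_neg_of_add_eq_zero_left h.symm
  -- δ j of x^ζ, j ≠ i, is zero
  have hxj : ∀ j : Fin n, j ≠ i → δ j (O (x ^ ζ)) = 0 := by
    intro j hj
    have h0 : δ j (O x) = 0 := hδ₂ j i hj.symm
    rcases hζ with h | h <;> subst h
    · rw [zpow_one]; exact h0
    · rw [zpow_neg_one, hinv j x, h0, mul_zero, neg_zero]
  -- the correction group element g
  set g : FG n := if ζ = 1 then 1 else x⁻¹ with hg
  have hgj : ∀ j : Fin n, j ≠ i → δ j (O g) = 0 := by
    intro j hj
    rcases hζ with h | h <;> subst h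
    · simp only [hg, if_pos rfl]; exact hone j
    · simp only [hg]
      rw [if_neg (by norm_num)]
      rw [hinv j x, hδ₂ j i hj.symm, mul_zero, neg_zero]
  have hxi : δ i (O (x ^ ζ)) = ζ • O g := by
    rcases hζ with h | h <;> subst h
    · simp only [hg, if_pos rfl, zpow_one, map_one, one_smul]
      exact hδ₁ i
    · simp only [hg]
      rw [if_neg (by norm_num), zpow_neg_one, hinv i x, hδ₁ i, mul_one, neg_one_smul]
  -- general Leibniz rule
  have leib : ∀ (j : Fin n) (α β : GR n),
      δ j (α * β) = (ε β) • δ j α + α * δ j β := by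
    intro j α β
    induction α using MonoidAlgebra.induction_on with
    | of w =>
      induction β using MonoidAlgebra.induction_on with
      | of w' =>
        rw [← map_mul, hδ₃ j w w', hε, one_smul]
      | add β₁ β₂ h₁ h₂ =>
        rw [mul_add, map_add, h₁, h₂, map_add, map_add, mul_add, add_smul]
        abel
      | smul r β h =>
        rw [mul_smul_comm, map_smul, h, map_zsmul, smul_add, smul_smul, map_smul,
          mul_smul_comm, smul_eq_mul]
    | add α₁ α₂ h₁ h₂ =>
      rw [add_mul, map_add, h₁, h₂, map_add, smul_add, add_mul]
      abel
    | smul r α h =>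
      rw [smul_mul_assoc, map_smul, h, smul_add, map_smul, smul_mul_assoc,
        smul_comm (ε β) r]
  -- foxIter basics
  have foxadd : ∀ (l : List (Fin n)) (w₁ w₂ : GR n),
      foxIter δ l (w₁ + w₂) = foxIter δ l w₁ + foxIter δ l w₂ := by
    intro l
    induction l with
    | nil => intro w₁ w₂; rfl
    | cons j l ih => intro w₁ w₂; simp only [foxIter, ih, map_add]
  have foxsmul : ∀ (l : List (Fin n)) (c : ℤ) (w : GR n),
      foxIter δ l (c • w) = c • foxIter δ l w := by
    intro l
    induction l with
    | nil => intro c w; rfl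
    | cons j l ih => intro c w; simp only [foxIter, ih, map_smul]
  have foxappend : ∀ (p q : List (Fin n)) (w : GR n),
      foxIter δ (p ++ q) w = foxIter δ p (foxIter δ q w) := by
    intro p q w
    induction p with
    | nil => rfl
    | cons j p ih =>
      simp only [List.cons_append, foxIter]
      exact congrArg _ ih
  -- if all δ's along l kill α, then α slides out of foxIter
  have foxmul : ∀ (α : GR n) (l : List (Fin n)), (∀ j ∈ l, δ j α = 0) →
      ∀ w : GR n, foxIter δ l (α * w) = α * foxIter δ l w := by
    intro α l
    induction l with
    | nil => intro _ w; rfl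
    | cons j l ih =>
      intro h w
      simp only [foxIter]
      rw [ih (fun k hk => h k (List.mem_cons_of_mem _ hk)) w, leib,
        h j List.mem_cons_self, smul_zero, zero_add]
  -- nodup consequences
  have hia : i ∉ a := by
    intro hmem
    exact (List.nodup_append'.mp hnd).2.2 hmem List.mem_cons_self
  have hib : i ∉ b := by
    have := (List.nodup_append'.mp hnd).2.1
    exact (List.nodup_cons.mp this).1
  -- the correction element α
  set α : GR n := O (u * x ^ ζ) - O u with hα
  have hαj : ∀ j : Fin n, j ≠ i → δ j α = 0 := by
    intro j hj
    rw [hα, map_sub, hδ₃ j u (x ^ ζ), hxj j hj, mul_zero, add_zero, sub_self]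
  have hαi : δ i α = ζ • O (u * g) := by
    rw [hα, map_sub, hδ₃ i u (x ^ ζ), hxi, mul_smul_comm, ← map_mul, add_sub_cancel_left]
  have hεα : ε α = 0 := by
    rw [hα, map_sub, hε, hε, sub_self]
  -- key decomposition of O (u * x^ζ * v)
  have hdec : O (u * x ^ ζ * v) = O (u * v) + α * O v := by
    rw [hα, sub_mul, ← map_mul, ← map_mul, mul_assoc]
    abel
  -- step over b
  have hstepb : foxIter δ b (O (u * x ^ ζ * v)) =
      foxIter δ b (O (u * v)) + α * foxIter δ b (O v) := by
    rw [hdec, foxadd, foxmul α b (fun j hj => hαj j (fun h => hib (h ▸ hj)))]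
  -- step over i
  have hstepi : foxIter δ (i :: b) (O (u * x ^ ζ * v)) =
      foxIter δ (i :: b) (O (u * v)) +
        (ζ * ε (foxIter δ b (O v))) • O (u * g) +
        α * foxIter δ (i :: b) (O v) := by
    show δ i (foxIter δ b (O (u * x ^ ζ * v))) = _
    rw [hstepb, map_add, leib, hαi]
    simp only [foxIter]
    rw [smul_smul, mul_comm (ε (foxIter δ b (O v))) ζ, ← add_assoc]
  -- step over a
  have hstepa : foxIter δ (a ++ i :: b) (O (u * x ^ ζ * v)) =
      foxIter δ (a ++ i :: b) (O (u * v)) +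
        (ζ * ε (foxIter δ b (O v))) • foxIter δ a (O (u * g)) +
        α * foxIter δ (a ++ i :: b) (O v) := by
    rw [foxappend, hstepi, foxadd, foxadd, foxsmul,
      foxmul α a (fun j hj => hαj j (fun h => hia (h ▸ hj))), foxappend, foxappend]
  -- ε (foxIter a (O (u*g))) = ε (foxIter a (O u))
  have hug : ε (foxIter δ a (O (u * g))) = ε (foxIter δ a (O u)) := by
    have h1 : O (u * g) = O u + (O (u * g) - O u) * 1 := by rw [mul_one]; abel
    have h2 : ∀ j : Fin n, j ∈ a → δ j (O (u * g) - O u) = 0 := by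
      intro j hj
      have hj' : j ≠ i := fun h => hia (h ▸ hj)
      rw [map_sub, hδ₃ j u g, hgj j hj', mul_zero, add_zero, sub_self]
    rw [h1, foxadd, foxmul _ a h2, map_add, map_mul, map_sub, hε, hε, sub_self,
      zero_mul, add_zero]
  -- conclude
  rw [hstepa, map_add, map_add, map_zsmul, map_mul ε α, hεα, zero_mul, add_zero, hug,
    smul_eq_mul]
  ring
end

section
/- (Algebraic form of the skein relation for Milnor invariants, positive crossing.) Let i_1, …, i_r ∈ {1, …, n} be pairwise distinct indices, let 1 ≤ k ≤ r, and let u, v, w ∈ F be group elements. Then δ_{i_1}…δ_{i_r}(v · u⁻¹ x_{i_k} u · w)(1) − δ_{i_1}…δ_{i_r}(v w)(1) = δ_{i_1}…δ_{i_{k-1}}(v u⁻¹)(1) · δ_{i_{k+1}}…δ_{i_r}(u w)(1), where an empty composite of Fox derivatives applied to a group element and evaluated at 1 is understood to be 1. (In the topological interpretation, v u⁻¹ x_{i_k} u w and v w are the words in meridians representing the loose components l₊ and l₋ of two string links differing in one crossing of l with the i_k-th strand, and v u⁻¹, u w represent the loose components l_∞, l₀ of the two splittings of that crossing; the left-hand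 side is μ_{i_1…i_r}(L, l₊) − μ_{i_1…i_r}(L, l₋) and the right-hand side is μ_{i_1…i_{k-1}}(L − L_{i_k}, l_∞)·μ_{i_{k+1}…i_r}(L − L_{i_k}, l₀).) -/
open MonoidAlgebra

namespace MilnorAux

variable {n : ℕ} (δ : Fin n → (GR n →ₗ[ℤ] GR n)) (ε : GR n →+* ℤ)

lemma foxIter_nil (x : GR n) : foxIter δ [] x = x := rfl

lemma foxIter_cons (i : Fin n) (l : List (Fin n)) (x : GR n) :
    foxIter δ (i :: l) x = δ i (foxIter δ l x) := rfl

lemma foxIter_append (l₁ l₂ : List (Fin n)) (x : GR n) :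
    foxIter δ (l₁ ++ l₂) x = foxIter δ l₁ (foxIter δ l₂ x) := by
  induction l₁ with
  | nil => rfl
  | cons i l ih => simp [foxIter_cons, ih]

variable (hδ₃ : ∀ (i : Fin n) (u v : FG n),
      δ i (of ℤ (FG n) (u * v)) =
        δ i (of ℤ (FG n) u) + of ℤ (FG n) u * δ i (of ℤ (FG n) v))
variable (hε : ∀ g : FG n, ε (of ℤ (FG n) g) = 1)

include hδ₃ in
lemma delta_one (i : Fin n) : δ i (1 : GR n) = 0 := by
  have h := hδ₃ i 1 1
  rw [mul_one, map_one, one_mul] at h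
  exact (left_eq_add.mp h)

include hδ₃ in
lemma foxIter_one (l : List (Fin n)) :
    foxIter δ l (1 : GR n) = if l = [] then 1 else 0 := by
  induction l with
  | nil => rfl
  | cons i l ih =>
    rw [foxIter_cons, ih]
    split <;> rename_i h
    · simp [h, delta_one δ hδ₃]
    · simp [delta_one δ hδ₃]

include hδ₃ hε in
lemma leibniz (i : Fin n) (g : FG n) (x : GR n) :
    δ i (of ℤ (FG n) g * x) = ε x • δ i (of ℤ (FG n) g) + of ℤ (FG n) g * δ i x := by
  induction x using MonoidAlgebra.induction_on with
  | of h => rw [← map_mul, hδ₃, hε, one_smul]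
  | add f g' hf hg =>
    rw [mul_add, map_add, hf, hg, map_add, map_add, mul_add]
    rw [add_smul]
    abel
  | smul r f hf =>
    rw [mul_smul_comm, map_smul, hf, map_zsmul, smul_eq_mul, smul_add, smul_smul,
      map_smul, mul_smul_comm, mul_comm r]

include hδ₃ hε in
lemma foxIter_gen_mul (m : List (Fin n)) (g : FG n) (x : GR n)
    (hg : ∀ j ∈ m, δ j (of ℤ (FG n) g) = 0) :
    foxIter δ m (of ℤ (FG n) g * x) = of ℤ (FG n) g * foxIter δ m x := by
  induction m with
  | nil => rfl
  | cons j m ih =>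
    rw [foxIter_cons, ih (fun j hj => hg j (List.mem_cons_of_mem _ hj)),
      leibniz δ ε hδ₃ hε, hg j (List.mem_cons_self), smul_zero, zero_add, foxIter_cons]

variable (hδ₁ : ∀ i : Fin n, δ i (of ℤ (FG n) (FreeGroup.of i)) = 1)
variable (hδ₂ : ∀ i j : Fin n, j ≠ i → δ i (of ℤ (FG n) (FreeGroup.of j)) = 0)

include hδ₁ hδ₂ hδ₃ hε in
lemma foxIter_gen_mul_mid (i : Fin n) (m₁ m₂ : List (Fin n)) (x : GR n)
    (h₁ : i ∉ m₁) (h₂ : i ∉ m₂) :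
    foxIter δ (m₁ ++ i :: m₂) (of ℤ (FG n) (FreeGroup.of i) * x) =
      of ℤ (FG n) (FreeGroup.of i) * foxIter δ (m₁ ++ i :: m₂) x +
        ε (foxIter δ m₂ x) • foxIter δ m₁ (1 : GR n) := by
  induction m₁ with
  | nil =>
    rw [List.nil_append, foxIter_cons,
      foxIter_gen_mul δ ε hδ₃ hε m₂ _ x
        (fun j hj => hδ₂ j i (fun h => h₂ (h ▸ hj))),
      leibniz δ ε hδ₃ hε, hδ₁ i, foxIter_cons, foxIter_nil]
    exact add_comm _ _
  | cons j m₁ ih =>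
    have hji : i ≠ j := fun h => h₁ (h ▸ List.mem_cons_self)
    rw [List.cons_append, foxIter_cons,
      ih (fun h => h₁ (List.mem_cons_of_mem _ h)), map_add,
      leibniz δ ε hδ₃ hε, hδ₂ j i hji, smul_zero, zero_add, map_smul]
    simp [foxIter_cons]

include hδ₃ hε in
lemma foxIter_mul (l : List (Fin n)) (g : FG n) (x : GR n) :
    foxIter δ l (of ℤ (FG n) g * x) =
      of ℤ (FG n) g * foxIter δ l x +
        ∑ k : Fin l.length,
          ε (foxIter δ (l.drop ((k : ℕ) + 1)) x) •
            foxIter δ (l.take (k : ℕ)) (δ (l.get k) (of ℤ (FG n) g)) := by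
  induction l with
  | nil => simp [foxIter_nil]
  | cons i l ih =>
    rw [foxIter_cons, ih, map_add, leibniz δ ε hδ₃ hε, map_sum]
    simp only [List.length_cons]
    rw [Fin.sum_univ_succ]
    simp only [map_smul, List.get_cons_zero, List.take_zero, List.drop_succ_cons,
      List.take_succ_cons, List.get_cons_succ, Fin.val_succ, Fin.val_zero,
      List.drop_zero, foxIter_nil, foxIter_cons]
    abel

include hδ₃ hε in
lemma eps_foxIter_mul (l : List (Fin n)) (g : FG n) (x : GR n) :
    ε (foxIter δ l (of ℤ (FG n) g * x)) =
      ∑ k ∈ Finset.range (l.length + 1),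
        ε (foxIter δ (l.take k) (of ℤ (FG n) g)) * ε (foxIter δ (l.drop k) x) := by
  rw [foxIter_mul δ ε hδ₃ hε, map_add, map_mul, hε, one_mul, map_sum,
    ← Fin.sum_univ_eq_sum_range
      (fun k => ε (foxIter δ (l.take k) (of ℤ (FG n) g)) * ε (foxIter δ (l.drop k) x))
      (l.length + 1),
    Fin.sum_univ_succ]
  simp only [Fin.val_zero, Fin.val_succ, List.take_zero, List.drop_zero, foxIter_nil, hε,
    one_mul]
  congr 1
  apply Finset.sum_congr rfl
  intro k _
  rw [map_zsmul, smul_eq_mul]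
  have ht : l.take ((k : ℕ) + 1) = l.take (k : ℕ) ++ [l.get k] := by
    rw [← List.take_concat_get k.isLt, List.concat_eq_append, List.get_eq_getElem]
  rw [ht, foxIter_append, mul_comm]
  rfl

include hδ₂ hδ₃ hε in
lemma eps_no_i (i : Fin n) (m : List (Fin n)) (hm : i ∉ m) (u w' : FG n) :
    ε (foxIter δ m (of ℤ (FG n) u⁻¹ *
        (of ℤ (FG n) (FreeGroup.of i) * of ℤ (FG n) (u * w')))) =
      ε (foxIter δ m (of ℤ (FG n) w')) := by
  rw [eps_foxIter_mul δ ε hδ₃ hε]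
  have h1 : ∀ k : ℕ,
      ε (foxIter δ (m.drop k) (of ℤ (FG n) (FreeGroup.of i) * of ℤ (FG n) (u * w')))
        = ε (foxIter δ (m.drop k) (of ℤ (FG n) (u * w'))) := by
    intro k
    rw [foxIter_gen_mul δ ε hδ₃ hε _ _ _
        (fun j hj => hδ₂ j i (fun h => by subst h; exact hm (List.drop_subset k m hj))),
      map_mul, hε, one_mul]
  rw [Finset.sum_congr rfl (fun k _ => by rw [h1 k]),
    ← eps_foxIter_mul δ ε hδ₃ hε, ← map_mul, inv_mul_cancel_left]

include hδ₁ hδ₂ hδ₃ hε in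
lemma eps_with_i (i : Fin n) (m₁ b : List (Fin n)) (h₁ : i ∉ m₁) (h₂ : i ∉ b) (u w' : FG n) :
    ε (foxIter δ (m₁ ++ i :: b) (of ℤ (FG n) u⁻¹ *
        (of ℤ (FG n) (FreeGroup.of i) * of ℤ (FG n) (u * w')))) =
      ε (foxIter δ (m₁ ++ i :: b) (of ℤ (FG n) w')) +
        ε (foxIter δ m₁ (of ℤ (FG n) u⁻¹)) * ε (foxIter δ b (of ℤ (FG n) (u * w'))) := by
  have hm : (m₁ ++ i :: b).length = m₁.length + (b.length + 1) := by simp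
  have key : ∀ k ∈ Finset.range ((m₁ ++ i :: b).length + 1),
      ε (foxIter δ ((m₁ ++ i :: b).take k) (of ℤ (FG n) u⁻¹)) *
        ε (foxIter δ ((m₁ ++ i :: b).drop k)
          (of ℤ (FG n) (FreeGroup.of i) * of ℤ (FG n) (u * w'))) =
      ε (foxIter δ ((m₁ ++ i :: b).take k) (of ℤ (FG n) u⁻¹)) *
        ε (foxIter δ ((m₁ ++ i :: b).drop k) (of ℤ (FG n) (u * w'))) +
      (if k = m₁.length then
        ε (foxIter δ m₁ (of ℤ (FG n) u⁻¹)) * ε (foxIter δ b (of ℤ (FG n) (u * w')))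
       else 0) := by
    intro k _
    have hinner : ε (foxIter δ ((m₁ ++ i :: b).drop k)
          (of ℤ (FG n) (FreeGroup.of i) * of ℤ (FG n) (u * w'))) =
        ε (foxIter δ ((m₁ ++ i :: b).drop k) (of ℤ (FG n) (u * w'))) +
          (if k = m₁.length then ε (foxIter δ b (of ℤ (FG n) (u * w'))) else 0) := by
      rcases lt_trichotomy k m₁.length with hk | hk | hk
      · have hd : (m₁ ++ i :: b).drop k = m₁.drop k ++ i :: b := by
          rw [List.drop_append, Nat.sub_eq_zero_of_le hk.le, List.drop_zero]
        have hne : m₁.drop k ≠ [] := by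
          rw [ne_eq, List.drop_eq_nil_iff]
          omega
        rw [hd, foxIter_gen_mul_mid δ ε hδ₃ hε hδ₁ hδ₂ i _ _ _
            (fun h => h₁ (List.drop_subset _ _ h)) h₂,
          map_add, map_mul, hε, one_mul, foxIter_one δ hδ₃, if_neg hne, smul_zero,
          map_zero, add_zero, if_neg hk.ne, add_zero]
      · subst hk
        have hd : (m₁ ++ i :: b).drop m₁.length = i :: b := List.drop_left
        have h0 := foxIter_gen_mul_mid δ ε hδ₃ hε hδ₁ hδ₂ i [] b
          (of ℤ (FG n) (u * w')) (by simp) h₂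
        rw [List.nil_append] at h0
        rw [hd, h0, map_add, map_mul, hε, one_mul, if_pos rfl]
        simp [foxIter_nil, map_zsmul]
      · have hd : (m₁ ++ i :: b).drop k = b.drop (k - m₁.length - 1) := by
          obtain ⟨j, hj⟩ : ∃ j, k - m₁.length = j + 1 := ⟨k - m₁.length - 1, by omega⟩
          rw [List.drop_append, List.drop_eq_nil_iff.mpr (le_of_lt hk),
            List.nil_append, hj, List.drop_succ_cons, Nat.add_sub_cancel]
        rw [hd, foxIter_gen_mul δ ε hδ₃ hε _ _ _
            (fun j hj => hδ₂ j i (fun h => by subst h; exact h₂ (List.drop_subset _ b hj))),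
          map_mul, hε, one_mul, if_neg (by omega), add_zero]
    rw [hinner, mul_add]
    congr 1
    by_cases hk : k = m₁.length
    · subst hk
      rw [if_pos rfl, if_pos rfl, List.take_left]
    · rw [if_neg hk, if_neg hk, mul_zero]
  rw [eps_foxIter_mul δ ε hδ₃ hε, Finset.sum_congr rfl key, Finset.sum_add_distrib,
    ← eps_foxIter_mul δ ε hδ₃ hε, ← map_mul, inv_mul_cancel_left,
    Finset.sum_ite_eq' (Finset.range ((m₁ ++ i :: b).length + 1)) m₁.length,
    if_pos (by rw [hm]; exact Finset.mem_range.mpr (by omega))]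

end MilnorAux

/-- Algebraic form of the skein relation for Milnor invariants, positive crossing:
`δ_{i₁}…δ_{iᵣ}(v u⁻¹ x_{iₖ} u w)(1) - δ_{i₁}…δ_{iᵣ}(vw)(1)
  = δ_{i₁}…δ_{iₖ₋₁}(v u⁻¹)(1) · δ_{iₖ₊₁}…δ_{iᵣ}(u w)(1)`,
i.e. `μ_{i₁…iᵣ}(L, l₊) - μ_{i₁…iᵣ}(L, l₋)
  = μ_{i₁…iₖ₋₁}(L - L_{iₖ}, l∞) · μ_{iₖ₊₁…iᵣ}(L - L_{iₖ}, l₀)`. -/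
theorem milnor_skein_relation_positive (n : ℕ)
    (δ : Fin n → (GR n →ₗ[ℤ] GR n))
    (hδ₁ : ∀ i : Fin n, δ i (of ℤ (FG n) (FreeGroup.of i)) = 1)
    (hδ₂ : ∀ i j : Fin n, j ≠ i → δ i (of ℤ (FG n) (FreeGroup.of j)) = 0)
    (hδ₃ : ∀ (i : Fin n) (u v : FG n),
      δ i (of ℤ (FG n) (u * v)) =
        δ i (of ℤ (FG n) u) + of ℤ (FG n) u * δ i (of ℤ (FG n) v))
    (ε : GR n →+* ℤ)
    (hε : ∀ g : FG n, ε (of ℤ (FG n) g) = 1)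
    (a b : List (Fin n)) (i : Fin n) (hnd : (a ++ i :: b).Nodup) (u v w : FG n) :
    ε (foxIter δ (a ++ i :: b)
        (of ℤ (FG n) (v * (u⁻¹ * FreeGroup.of i * u) * w))) -
      ε (foxIter δ (a ++ i :: b) (of ℤ (FG n) (v * w))) =
        ε (foxIter δ a (of ℤ (FG n) (v * u⁻¹))) *
          ε (foxIter δ b (of ℤ (FG n) (u * w))) := by
  classical
  obtain ⟨-, hnb', hdisj⟩ := List.nodup_append'.mp hnd
  have hna : i ∉ a := fun h => hdisj h (List.mem_cons_self)
  have hnb : i ∉ b := (List.nodup_cons.mp hnb').1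
  have e1 : of ℤ (FG n) (v * (u⁻¹ * FreeGroup.of i * u) * w) =
      of ℤ (FG n) v * (of ℤ (FG n) u⁻¹ *
        (of ℤ (FG n) (FreeGroup.of i) * of ℤ (FG n) (u * w))) := by
    rw [← map_mul, ← map_mul, ← map_mul]
    congr 1
    group
  have e2 : of ℤ (FG n) (v * w) = of ℤ (FG n) v * of ℤ (FG n) w := map_mul _ _ _
  rw [e1, e2, MilnorAux.eps_foxIter_mul δ ε hδ₃ hε, MilnorAux.eps_foxIter_mul δ ε hδ₃ hε,
    ← Finset.sum_sub_distrib]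
  have key : ∀ k ∈ Finset.range ((a ++ i :: b).length + 1),
      (ε (foxIter δ ((a ++ i :: b).take k) (of ℤ (FG n) v)) *
         ε (foxIter δ ((a ++ i :: b).drop k) (of ℤ (FG n) u⁻¹ *
            (of ℤ (FG n) (FreeGroup.of i) * of ℤ (FG n) (u * w)))) -
       ε (foxIter δ ((a ++ i :: b).take k) (of ℤ (FG n) v)) *
         ε (foxIter δ ((a ++ i :: b).drop k) (of ℤ (FG n) w)))
      = if k ≤ a.length then
          ε (foxIter δ (a.take k) (of ℤ (FG n) v)) *
            ε (foxIter δ (a.drop k) (of ℤ (FG n) u⁻¹)) *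
            ε (foxIter δ b (of ℤ (FG n) (u * w)))
        else 0 := by
    intro k _
    by_cases hk : k ≤ a.length
    · have hd : (a ++ i :: b).drop k = a.drop k ++ i :: b := by
        rw [List.drop_append, Nat.sub_eq_zero_of_le hk, List.drop_zero]
      have ht : (a ++ i :: b).take k = a.take k := by
        rw [List.take_append, Nat.sub_eq_zero_of_le hk, List.take_zero,
          List.append_nil]
      rw [if_pos hk, hd, ht,
        MilnorAux.eps_with_i δ ε hδ₃ hε hδ₁ hδ₂ i (a.drop k) b
          (fun h => hna (List.drop_subset _ _ h)) hnb u w]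
      ring
    · have hd : (a ++ i :: b).drop k = b.drop (k - a.length - 1) := by
        obtain ⟨j, hj⟩ : ∃ j, k - a.length = j + 1 := ⟨k - a.length - 1, by omega⟩
        rw [List.drop_append, List.drop_eq_nil_iff.mpr (by omega),
          List.nil_append, hj, List.drop_succ_cons, Nat.add_sub_cancel]
      rw [if_neg hk, hd,
        MilnorAux.eps_no_i δ ε hδ₃ hε hδ₂ i _
          (fun h => hnb (List.drop_subset _ _ h)) u w, sub_self]
  rw [Finset.sum_congr rfl key,
    ← Finset.sum_subset
      (show Finset.range (a.length + 1) ⊆ Finset.range ((a ++ i :: b).length + 1) from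
        Finset.range_subset_range.mpr (by simp))
      (fun k _ hk => if_neg (fun h => hk (Finset.mem_range.mpr (by omega)))),
    Finset.sum_congr rfl
      (fun k hk => if_pos (Nat.lt_succ_iff.mp (Finset.mem_range.mp hk))),
    ← Finset.sum_mul, ← MilnorAux.eps_foxIter_mul δ ε hδ₃ hε,
    ← map_mul (of ℤ (FG n)) v u⁻¹]
end

section
/- (Algebraic form of the skein relation for Milnor invariants, negative crossing.) Let i_1, …, i_r ∈ {1, …, n} be pairwise distinct indices, let 1 ≤ k ≤ r, and let u, v, w ∈ F be group elements. Then δ_{i_1}…δ_{i_r}(v w)(1) − δ_{i_1}…δ_{i_r}(v · u⁻¹ x_{i_k}⁻¹ u · w)(1) = δ_{i_1}…δ_{i_{k-1}}(v u⁻¹)(1) · δ_{i_{k+1}}…δ_{i_r}(u w)(1), where an empty composite of Fox derivatives applied to a group element and evaluated at 1 is understood to be 1. (Topologically: this is the case of the skein relation where the positive-crossing resolution l₊ = vw overpasses the i_k-th strand and l₋ = v u⁻¹ x_{i_k}⁻¹ u w underpasses it.) -/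
open MonoidAlgebra

section Aux

variable {n : ℕ} (δ : Fin n → (GR n →ₗ[ℤ] GR n))

lemma foxIter_append (c₁ c₂ : List (Fin n)) (x : GR n) :
    foxIter δ (c₁ ++ c₂) x = foxIter δ c₁ (foxIter δ c₂ x) := by
  induction c₁ with
  | nil => rfl
  | cons j c ih => simp [foxIter, ih]

lemma foxIter_add (c : List (Fin n)) (x y : GR n) :
    foxIter δ c (x + y) = foxIter δ c x + foxIter δ c y := by
  induction c with
  | nil => rfl
  | cons j c ih => simp [foxIter, ih]

lemma foxIter_sub (c : List (Fin n)) (x y : GR n) :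
    foxIter δ c (x - y) = foxIter δ c x - foxIter δ c y := by
  induction c with
  | nil => rfl
  | cons j c ih => simp [foxIter, ih]

lemma foxIter_smul (c : List (Fin n)) (m : ℤ) (x : GR n) :
    foxIter δ c (m • x) = m • foxIter δ c x := by
  induction c with
  | nil => rfl
  | cons j c ih =>
    show δ j (foxIter δ c (m • x)) = m • δ j (foxIter δ c x)
    rw [ih, map_smul]

variable
    (hδ₃ : ∀ (i : Fin n) (u v : FG n),
      δ i (of ℤ (FG n) (u * v)) =
        δ i (of ℤ (FG n) u) + of ℤ (FG n) u * δ i (of ℤ (FG n) v))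
    (ε : GR n →+* ℤ)
    (hε : ∀ g : FG n, ε (of ℤ (FG n) g) = 1)

include hδ₃ in
lemma fox_one (j : Fin n) : δ j (1 : GR n) = 0 := by
  have h := hδ₃ j 1 1
  simp only [mul_one, map_one, one_mul] at h
  exact (left_eq_add.mp h)

include hδ₃ hε in
/-- Product rule for the Fox derivative on the whole group ring. -/
lemma fox_mul (j : Fin n) (α β : GR n) :
    δ j (α * β) = ε β • δ j α + α * δ j β := by
  induction α using MonoidAlgebra.induction_on with
  | of g =>
    induction β using MonoidAlgebra.induction_on with
    | of h =>
      rw [← map_mul (of ℤ (FG n)), hδ₃, hε h, one_smul]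
    | add f₁ f₂ h₁ h₂ =>
      rw [mul_add, map_add, h₁, h₂, map_add, map_add, mul_add, add_smul]
      abel
    | smul r f h =>
      rw [mul_smul_comm, map_smul, h, smul_add, smul_smul, map_zsmul,
        smul_eq_mul, map_smul, mul_smul_comm]
  | add f₁ f₂ h₁ h₂ =>
    rw [add_mul, map_add, h₁, h₂, map_add, add_mul, smul_add]
    abel
  | smul r f h =>
    rw [smul_mul_assoc, map_smul, h, map_smul, smul_add, smul_comm r (ε β),
      smul_mul_assoc]

include hδ₃ hε in
/-- If `δ j α = 0` for all `j` occurring in `c`, left multiplication by `α`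
commutes with the iterated Fox derivative. -/
lemma foxIter_mul_left (c : List (Fin n)) (α : GR n)
    (hα : ∀ j ∈ c, δ j α = 0) (β : GR n) :
    foxIter δ c (α * β) = α * foxIter δ c β := by
  induction c with
  | nil => rfl
  | cons j c ih =>
    have : foxIter δ (j :: c) (α * β) = δ j (α * foxIter δ c β) := by
      simp [foxIter, ih (fun k hk => hα k (List.mem_cons_of_mem _ hk))]
    rw [this, fox_mul δ hδ₃ ε hε, hα j (List.mem_cons_self), smul_zero,
      zero_add]
    rfl

include hδ₃ hε in
/-- If `ε β = 1` and `δ j β = 0` for all `j` occurring in the nonempty list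
`c`, then the factor `β` disappears under the iterated Fox derivative. -/
lemma foxIter_mul_right' (c : List (Fin n)) (hc : c ≠ []) (β : GR n)
    (hβ₀ : ε β = 1) (hβ : ∀ j ∈ c, δ j β = 0) (α : GR n) :
    foxIter δ c (α * β) = foxIter δ c α := by
  induction c generalizing α with
  | nil => exact absurd rfl hc
  | cons j c ih =>
    cases c with
    | nil =>
      show δ j (α * β) = δ j α
      rw [fox_mul δ hδ₃ ε hε, hβ₀, one_smul, hβ j (List.mem_cons_self),
        mul_zero, add_zero]
    | cons k c' =>
      show δ j (foxIter δ (k :: c') (α * β)) = δ j (foxIter δ (k :: c') α)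
      rw [ih (by simp) (fun l hl => hβ l (List.mem_cons_of_mem _ hl))]

include hδ₃ hε in
lemma eps_foxIter_mul_right (c : List (Fin n)) (β : GR n)
    (hβ₀ : ε β = 1) (hβ : ∀ j ∈ c, δ j β = 0) (α : GR n) :
    ε (foxIter δ c (α * β)) = ε (foxIter δ c α) := by
  cases c with
  | nil =>
    show ε (α * β) = ε α
    rw [map_mul, hβ₀, mul_one]
  | cons j c =>
    rw [foxIter_mul_right' δ hδ₃ ε hε _ (by simp) β hβ₀ hβ]

end Aux

/-- Algebraic form of the skein relation for Milnor invariants, negative crossing: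
`δ_{i₁}…δ_{iᵣ}(vw)(1) - δ_{i₁}…δ_{iᵣ}(v u⁻¹ x_{iₖ}⁻¹ u w)(1)
  = δ_{i₁}…δ_{iₖ₋₁}(v u⁻¹)(1) · δ_{iₖ₊₁}…δ_{iᵣ}(u w)(1)`. -/
theorem milnor_skein_relation_negative (n : ℕ)
    (δ : Fin n → (GR n →ₗ[ℤ] GR n))
    (hδ₁ : ∀ i : Fin n, δ i (of ℤ (FG n) (FreeGroup.of i)) = 1)
    (hδ₂ : ∀ i j : Fin n, j ≠ i → δ i (of ℤ (FG n) (FreeGroup.of j)) = 0)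
    (hδ₃ : ∀ (i : Fin n) (u v : FG n),
      δ i (of ℤ (FG n) (u * v)) =
        δ i (of ℤ (FG n) u) + of ℤ (FG n) u * δ i (of ℤ (FG n) v))
    (ε : GR n →+* ℤ)
    (hε : ∀ g : FG n, ε (of ℤ (FG n) g) = 1)
    (a b : List (Fin n)) (i : Fin n) (hnd : (a ++ i :: b).Nodup) (u v w : FG n) :
    ε (foxIter δ (a ++ i :: b) (of ℤ (FG n) (v * w))) -
      ε (foxIter δ (a ++ i :: b)
        (of ℤ (FG n) (v * (u⁻¹ * (FreeGroup.of i)⁻¹ * u) * w))) =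
        ε (foxIter δ a (of ℤ (FG n) (v * u⁻¹))) *
          ε (foxIter δ b (of ℤ (FG n) (u * w))) := by
  classical
  obtain ⟨ha, hib', hdisj⟩ := List.nodup_append'.mp hnd
  have hia : i ∉ a := fun h => hdisj h (List.mem_cons_self)
  have hib : i ∉ b := (List.nodup_cons.mp hib').1
  set x : FG n := FreeGroup.of i with hxdef
  have hone : ∀ j : Fin n, δ j (1 : GR n) = 0 := fox_one δ hδ₃
  have hδx : ∀ j : Fin n, j ≠ i → δ j (of ℤ (FG n) x) = 0 := fun j hj =>
    hδ₂ j i (Ne.symm hj)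
  have hδxinv : ∀ j : Fin n, j ≠ i → δ j (of ℤ (FG n) x⁻¹) = 0 := by
    intro j hj
    have h := hδ₃ j x⁻¹ x
    rw [inv_mul_cancel, map_one, hone, hδx j hj, mul_zero, add_zero] at h
    exact h.symm
  set A : GR n := of ℤ (FG n) (v * u⁻¹ * x⁻¹) with hAdef
  set C : GR n := of ℤ (FG n) x - 1 with hCdef
  set B : GR n := of ℤ (FG n) (u * w) with hBdef
  have hεC : ε C = 0 := by rw [hCdef, map_sub, hε, map_one, sub_self]
  have hδC : ∀ j : Fin n, j ≠ i → δ j C = 0 := by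
    intro j hj; rw [hCdef, map_sub, hδx j hj, hone, sub_self]
  have hδiC : δ i C = 1 := by rw [hCdef, map_sub, hδ₁, hone, sub_zero]
  have hAC : ∀ j : Fin n, j ≠ i → δ j (A * C) = 0 := by
    intro j hj
    rw [fox_mul δ hδ₃ ε hε, hεC, zero_smul, hδC j hj, mul_zero, add_zero]
  have hδiAC : δ i (A * C) = A := by
    rw [fox_mul δ hδ₃ ε hε, hεC, zero_smul, hδiC, mul_one, zero_add]
  have key : A * C * B =
      of ℤ (FG n) (v * w) - of ℤ (FG n) (v * (u⁻¹ * x⁻¹ * u) * w) := by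
    have e1 : v * u⁻¹ * x⁻¹ * x * (u * w) = v * w := by group
    have e2 : v * u⁻¹ * x⁻¹ * (u * w) = v * (u⁻¹ * x⁻¹ * u) * w := by group
    rw [hAdef, hCdef, hBdef, mul_sub, mul_one, sub_mul, ← map_mul, ← map_mul,
      ← map_mul, e1, e2]
  have step1 : foxIter δ b (A * C * B) = (A * C) * foxIter δ b B :=
    foxIter_mul_left δ hδ₃ ε hε b (A * C)
      (fun j hj => hAC j (fun e => hib (e ▸ hj))) B
  have step2 : foxIter δ (i :: b) (A * C * B)
      = ε (foxIter δ b B) • A + (A * C) * δ i (foxIter δ b B) := by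
    show δ i (foxIter δ b (A * C * B)) = _
    rw [step1, fox_mul δ hδ₃ ε hε, hδiAC]
  have step3 : foxIter δ (a ++ i :: b) (A * C * B)
      = ε (foxIter δ b B) • foxIter δ a A
        + (A * C) * foxIter δ a (δ i (foxIter δ b B)) := by
    rw [foxIter_append, step2, foxIter_add, foxIter_smul,
      foxIter_mul_left δ hδ₃ ε hε a (A * C)
        (fun j hj => hAC j (fun e => hia (e ▸ hj)))]
  have step4 : ε (foxIter δ (a ++ i :: b) (A * C * B))
      = ε (foxIter δ b B) * ε (foxIter δ a A) := by
    rw [step3, map_add, map_mul, map_mul, hεC, mul_zero, zero_mul, add_zero,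
      zsmul_eq_mul, map_mul, map_intCast, Int.cast_id]
  have step5 : ε (foxIter δ a A) = ε (foxIter δ a (of ℤ (FG n) (v * u⁻¹))) := by
    have hA : A = of ℤ (FG n) (v * u⁻¹) * of ℤ (FG n) x⁻¹ := by
      rw [hAdef, ← map_mul]
    rw [hA, eps_foxIter_mul_right δ hδ₃ ε hε a _ (hε _)
      (fun j hj => hδxinv j (fun e => hia (e ▸ hj)))]
  have main : ε (foxIter δ (a ++ i :: b) (of ℤ (FG n) (v * w))) -
      ε (foxIter δ (a ++ i :: b) (of ℤ (FG n) (v * (u⁻¹ * x⁻¹ * u) * w)))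
      = ε (foxIter δ (a ++ i :: b) (A * C * B)) := by
    rw [key, foxIter_sub, map_sub]
  rw [main, step4, step5, mul_comm]
end

section
/- (Invariance of μ-invariants with distinct indices under the link-homotopy relations; well-definedness on the reduced group ring.) Let i_1, …, i_r ∈ {1, …, n} be pairwise distinct indices, let j ∈ {1, …, n} be any index, and let g, h, u, v ∈ F be group elements. Write a = g x_j g⁻¹ and b = h x_j h⁻¹ (two conjugates of the same generator x_j). Then δ_{i_1}…δ_{i_r}(u · (a b a⁻¹ b⁻¹) · v)(1) = δ_{i_1}…δ_{i_r}(u v)(1). In other words, inserting the commutator of two conjugates of the same generator into a word does not change any iterated Fox derivative with pairwise distinct indices evaluated at 1; hence the functionals g ↦ δ_{i_1}…δ_{i_r}(g)(1) with distinct indices descend to the reduced free group F̃ (the quotient of F by the relations that each generator commutes with all of its conjugates). -/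
open MonoidAlgebra

namespace FoxAux

variable {n : ℕ} (δ : Fin n → (GR n →ₗ[ℤ] GR n)) (ε : GR n →+* ℤ)

lemma foxIter_sub (l : List (Fin n)) (x y : GR n) :
    foxIter δ l (x - y) = foxIter δ l x - foxIter δ l y := by
  induction l with
  | nil => rfl
  | cons i l ih => simp [foxIter, ih, map_sub]

variable
    (hδ₃ : ∀ (i : Fin n) (u v : FG n),
      δ i (of ℤ (FG n) (u * v)) =
        δ i (of ℤ (FG n) u) + of ℤ (FG n) u * δ i (of ℤ (FG n) v))
    (hε : ∀ g : FG n, ε (of ℤ (FG n) g) = 1)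

include hδ₃ in
lemma delta_one (i : Fin n) : δ i (1 : GR n) = 0 := by
  have h := hδ₃ i 1 1
  simp only [mul_one, map_one, one_mul] at h
  exact left_eq_add.mp h

include hδ₃ hε in
/-- The extended Leibniz rule for general elements of the group ring. -/
lemma leibniz (i : Fin n) (x z : GR n) :
    δ i (x * z) = ε z • δ i x + x * δ i z := by
  induction x using MonoidAlgebra.induction_on with
  | of u =>
    induction z using MonoidAlgebra.induction_on with
    | of v =>
      rw [← map_mul, hδ₃ i u v, hε v]
      simp
    | add f g hf hg =>
      simp only [mul_add, map_add, hf, hg, smul_add, add_smul]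
      abel
    | smul r f hf =>
      simp only [mul_smul_comm, map_smul, hf, smul_add, smul_smul, map_zsmul ε,
        smul_eq_mul]
  | add f g hf hg =>
    simp only [add_mul, map_add, hf, hg, smul_add]
    abel
  | smul r f hf =>
    simp only [smul_mul_assoc, map_smul, hf, smul_add, smul_smul, mul_comm]

include hδ₃ hε in
lemma split_ring (I : List (Fin n)) (x y : GR n) :
    foxIter δ I (x * y) = x * foxIter δ I y +
      ∑ k ∈ Finset.range I.length,
        ε (foxIter δ (I.drop (k+1)) y) • foxIter δ (I.take (k+1)) x := by
  induction I with
  | nil => simp [foxIter]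
  | cons i l ih =>
    show δ i (foxIter δ l (x * y)) = _
    rw [ih, map_add, leibniz δ ε hδ₃ hε, map_sum]
    have hlen : (i :: l).length = l.length + 1 := rfl
    rw [hlen, Finset.sum_range_succ']
    simp only [List.drop_succ_cons, List.take_succ_cons, List.drop_zero, map_smul]
    show ε (foxIter δ l y) • δ i x + x * δ i (foxIter δ l y) +
      ∑ k ∈ Finset.range l.length,
        ε (foxIter δ (l.drop (k+1)) y) • δ i (foxIter δ (l.take (k+1)) x) =
      x * δ i (foxIter δ l y) +
      ((∑ k ∈ Finset.range l.length,
          ε (foxIter δ (l.drop (k+1)) y) • δ i (foxIter δ (l.take (k+1)) x)) +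
        ε (foxIter δ l y) • δ i x)
    abel

include hδ₃ hε in
/-- The split formula: `ε ∘ foxIter` of a product is the sum over all splittings. -/
lemma split (I : List (Fin n)) (x y : GR n) :
    ε (foxIter δ I (x * y)) =
      ∑ k ∈ Finset.range (I.length + 1),
        ε (foxIter δ (I.take k) x) * ε (foxIter δ (I.drop k) y) := by
  rw [split_ring δ ε hδ₃ hε, map_add, map_sum, Finset.sum_range_succ']
  simp only [List.take_zero, List.drop_zero, map_zsmul ε, smul_eq_mul, map_mul]
  show ε x * ε (foxIter δ I y) + _ = _ + ε (foxIter δ [] x) * ε (foxIter δ I y)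
  rw [add_comm]
  congr 1
  exact Finset.sum_congr rfl fun k _ => mul_comm _ _

variable
    (hδ₁ : ∀ i : Fin n, δ i (of ℤ (FG n) (FreeGroup.of i)) = 1)
    (hδ₂ : ∀ i j : Fin n, j ≠ i → δ i (of ℤ (FG n) (FreeGroup.of j)) = 0)

include hδ₁ hδ₂ hδ₃ in
lemma foxgen (j : Fin n) (l : List (Fin n)) (i : Fin n) :
    foxIter δ (i :: l) (of ℤ (FG n) (FreeGroup.of j)) =
      if i :: l = [j] then 1 else 0 := by
  induction l generalizing i with
  | nil =>
    show δ i (of ℤ (FG n) (FreeGroup.of j)) = _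
    by_cases h : i = j
    · subst h
      rw [hδ₁ i, if_pos rfl]
    · rw [hδ₂ i j (fun hh => h hh.symm), if_neg (by simpa using h)]
  | cons i' l ih =>
    show δ i (foxIter δ (i' :: l) (of ℤ (FG n) (FreeGroup.of j))) = _
    rw [ih i', if_neg (show ¬(i :: i' :: l = [j]) by simp)]
    by_cases h : i' :: l = [j]
    · rw [if_pos h, delta_one δ hδ₃]
    · rw [if_neg h, map_zero]

include hδ₁ hδ₂ hδ₃ hε in
lemma genval (j : Fin n) (J : List (Fin n)) (hj : j ∉ J) :
    ε (foxIter δ J (of ℤ (FG n) (FreeGroup.of j))) = if J = [] then 1 else 0 := by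
  cases J with
  | nil =>
    show ε (of ℤ (FG n) (FreeGroup.of j)) = _
    rw [hε, if_pos rfl]
  | cons i l =>
    have hne : ¬(i :: l = [j]) := by
      intro hh
      rw [hh] at hj
      exact hj (List.mem_singleton_self j)
    rw [foxgen δ hδ₃ hδ₁ hδ₂ j l i, if_neg hne, map_zero, if_neg (by simp)]

include hδ₁ hδ₂ hδ₃ hε in
/-- Every "monomial" of `of (g xⱼ g⁻¹) - 1` contains `xⱼ`: the functionals vanish
whenever `j` is missing from the index list. -/
lemma conj_vanish (j : Fin n) (g : FG n) (I : List (Fin n)) (hj : j ∉ I) :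
    ε (foxIter δ I (of ℤ (FG n) (g * FreeGroup.of j * g⁻¹) - 1)) = 0 := by
  rw [foxIter_sub, map_sub]
  have h1 : of ℤ (FG n) (g * FreeGroup.of j * g⁻¹) =
      of ℤ (FG n) g * (of ℤ (FG n) (FreeGroup.of j) * of ℤ (FG n) g⁻¹) := by
    rw [← map_mul, ← map_mul, mul_assoc]
  have h2 : (1 : GR n) = of ℤ (FG n) g * of ℤ (FG n) g⁻¹ := by
    rw [← map_mul, mul_inv_cancel, map_one]
  rw [h1, h2, sub_eq_zero, split δ ε hδ₃ hε, split δ ε hδ₃ hε]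
  refine Finset.sum_congr rfl fun k hk => ?_
  congr 1
  rw [split δ ε hδ₃ hε, Finset.sum_range_succ']
  have hz : ∀ m ∈ Finset.range (I.drop k).length,
      ε (foxIter δ ((I.drop k).take (m+1)) (of ℤ (FG n) (FreeGroup.of j))) *
        ε (foxIter δ ((I.drop k).drop (m+1)) (of ℤ (FG n) g⁻¹)) = 0 := by
    intro m hm
    have hjm : j ∉ (I.drop k).take (m+1) := fun hmem =>
      hj (((List.take_sublist _ _).trans (List.drop_sublist _ _)).subset hmem)
    rw [genval δ ε hδ₃ hε hδ₁ hδ₂ j _ hjm, if_neg, zero_mul]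
    intro hnil
    rcases List.take_eq_nil_iff.mp hnil with h | h
    · omega
    · rw [h] at hm; simp at hm
  rw [Finset.sum_eq_zero hz, zero_add]
  simp only [List.take_zero, List.drop_zero]
  show ε (of ℤ (FG n) (FreeGroup.of j)) * _ = _
  rw [hε, one_mul]

include hδ₃ hε in
/-- A product of two elements each of whose "monomials" contains `xⱼ`, times anything,
vanishes on lists containing `j` at most once. -/
lemma vanish (j : Fin n) {A B : GR n}
    (hA : ∀ J : List (Fin n), j ∉ J → ε (foxIter δ J A) = 0)
    (hB : ∀ J : List (Fin n), j ∉ J → ε (foxIter δ J B) = 0)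
    (I : List (Fin n)) (hI : I.count j ≤ 1) (z : GR n) :
    ε (foxIter δ I (A * (B * z))) = 0 := by
  rw [split δ ε hδ₃ hε]
  apply Finset.sum_eq_zero
  intro k _
  by_cases hjk : j ∈ I.take k
  · have hcount : (I.take k).count j + (I.drop k).count j = I.count j := by
      rw [← List.count_append, List.take_append_drop]
    have h1 : 1 ≤ (I.take k).count j := List.count_pos_iff.mpr hjk
    have hjd : j ∉ I.drop k := by
      intro hm
      have := List.count_pos_iff.mpr hm
      omega
    have hzero : ε (foxIter δ (I.drop k) (B * z)) = 0 := by
      rw [split δ ε hδ₃ hε]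
      apply Finset.sum_eq_zero
      intro m _
      rw [hB _ (fun hm => hjd ((List.take_sublist _ _).subset hm)), zero_mul]
    rw [hzero, mul_zero]
  · rw [hA _ hjk, zero_mul]

include hδ₁ hδ₂ hδ₃ hε in
/-- The commutator of two conjugates of `xⱼ` has trivial functionals on lists
containing `j` at most once. -/
lemma comm_vanish (j : Fin n) (g h : FG n) (I : List (Fin n)) (hI : I.count j ≤ 1) :
    ε (foxIter δ I (of ℤ (FG n)
        ((g * FreeGroup.of j * g⁻¹) * (h * FreeGroup.of j * h⁻¹) *
          (g * FreeGroup.of j * g⁻¹)⁻¹ * (h * FreeGroup.of j * h⁻¹)⁻¹) - 1)) = 0 := by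
  set a : FG n := g * FreeGroup.of j * g⁻¹ with ha
  set b : FG n := h * FreeGroup.of j * h⁻¹ with hb
  set A : GR n := of ℤ (FG n) a - 1 with hA
  set B : GR n := of ℤ (FG n) b - 1 with hB
  set z : GR n := of ℤ (FG n) a⁻¹ * of ℤ (FG n) b⁻¹ with hz
  have key : of ℤ (FG n) (a * b * a⁻¹ * b⁻¹) - 1 = A * (B * z) - B * (A * z) := by
    have e1 : of ℤ (FG n) (a * b * a⁻¹ * b⁻¹) =
        of ℤ (FG n) a * of ℤ (FG n) b * (of ℤ (FG n) a⁻¹ * of ℤ (FG n) b⁻¹) := by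
      simp [map_mul, mul_assoc]
    have e2 : of ℤ (FG n) b * of ℤ (FG n) a * (of ℤ (FG n) a⁻¹ * of ℤ (FG n) b⁻¹) =
        1 := by
      rw [← map_mul, ← map_mul, ← map_mul, ← map_one (of ℤ (FG n))]
      congr 1
      group
    have expand : ∀ X Y W : GR n,
        (X - 1) * ((Y - 1) * W) - (Y - 1) * ((X - 1) * W) = X * Y * W - Y * X * W := by
      intro X Y W; noncomm_ring
    rw [hA, hB, expand, e1, ← hz, e2]
  have hA' : ∀ J : List (Fin n), j ∉ J → ε (foxIter δ J A) = 0 := fun J hJ =>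
    conj_vanish δ ε hδ₃ hε hδ₁ hδ₂ j g J hJ
  have hB' : ∀ J : List (Fin n), j ∉ J → ε (foxIter δ J B) = 0 := fun J hJ =>
    conj_vanish δ ε hδ₃ hε hδ₁ hδ₂ j h J hJ
  rw [key, foxIter_sub, map_sub,
    vanish δ ε hδ₃ hε j hA' hB' I hI z,
    vanish δ ε hδ₃ hε j hB' hA' I hI z, sub_zero]

end FoxAux

/-- Invariance under the link-homotopy relations: inserting the commutator of two
conjugates `a = g xⱼ g⁻¹`, `b = h xⱼ h⁻¹` of the same generator into a word does
not change any iterated Fox derivative with pairwise distinct indices evaluated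
at `1`; hence these functionals descend to the reduced free group. -/
theorem milnor_invariant_link_homotopy_invariance (n : ℕ)
    (δ : Fin n → (GR n →ₗ[ℤ] GR n))
    (hδ₁ : ∀ i : Fin n, δ i (of ℤ (FG n) (FreeGroup.of i)) = 1)
    (hδ₂ : ∀ i j : Fin n, j ≠ i → δ i (of ℤ (FG n) (FreeGroup.of j)) = 0)
    (hδ₃ : ∀ (i : Fin n) (u v : FG n),
      δ i (of ℤ (FG n) (u * v)) =
        δ i (of ℤ (FG n) u) + of ℤ (FG n) u * δ i (of ℤ (FG n) v))
    (ε : GR n →+* ℤ)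
    (hε : ∀ g : FG n, ε (of ℤ (FG n) g) = 1)
    (l : List (Fin n)) (hnd : l.Nodup) (j : Fin n) (g h u v : FG n) :
    ε (foxIter δ l (of ℤ (FG n)
        (u * ((g * FreeGroup.of j * g⁻¹) * (h * FreeGroup.of j * h⁻¹) *
          (g * FreeGroup.of j * g⁻¹)⁻¹ * (h * FreeGroup.of j * h⁻¹)⁻¹) * v))) =
      ε (foxIter δ l (of ℤ (FG n) (u * v))) := by
  set c : FG n := (g * FreeGroup.of j * g⁻¹) * (h * FreeGroup.of j * h⁻¹) *
      (g * FreeGroup.of j * g⁻¹)⁻¹ * (h * FreeGroup.of j * h⁻¹)⁻¹ with hc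
  rw [← sub_eq_zero, ← map_sub, ← FoxAux.foxIter_sub]
  have key : of ℤ (FG n) (u * c * v) - of ℤ (FG n) (u * v) =
      of ℤ (FG n) u * ((of ℤ (FG n) c - 1) * of ℤ (FG n) v) := by
    rw [map_mul (of ℤ (FG n)) (u * c) v, map_mul (of ℤ (FG n)) u c,
      map_mul (of ℤ (FG n)) u v]
    noncomm_ring
  rw [key, FoxAux.split δ ε hδ₃ hε]
  apply Finset.sum_eq_zero
  intro k _
  have h0 : ε (foxIter δ (l.drop k) ((of ℤ (FG n) c - 1) * of ℤ (FG n) v)) = 0 := by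
    rw [FoxAux.split δ ε hδ₃ hε]
    apply Finset.sum_eq_zero
    intro m _
    have hcount : ((l.drop k).take m).count j ≤ 1 := by
      calc ((l.drop k).take m).count j ≤ l.count j :=
            (((List.take_sublist _ _).trans (List.drop_sublist _ _)).count_le j)
        _ ≤ 1 := List.nodup_iff_count_le_one.mp hnd j
    rw [FoxAux.comm_vanish δ ε hδ₃ hε hδ₁ hδ₂ j g h _ hcount, zero_mul]
  rw [h0, mul_zero]
end

section
/- (Iterated Fox derivatives at 1 compute Magnus expansion coefficients, for positive words.) Let A be the free associative ℤ-algebra on noncommuting generators X_1, …, X_n, identified with the monoid algebra of the free monoid on n letters, so that the words in the letters form a ℤ-basis of A. For a finite sequence j_1, …, j_m ∈ {1, …, n}, let θ = (1 + X_{j_1})(1 + X_{j_2})⋯(1 + X_{j_m}) ∈ A be the Magnus expansion of the positive word g = x_{j_1} x_{j_2} ⋯ x_{j_m} ∈ F. Then for every finite sequence i_1, …, i_r ∈ {1, …, n}, the coefficient of the basis word X_{i_1} X_{i_2} ⋯ X_{i_r} in θ equals δ_{i_1}…δ_{i_r}(g)(1). -/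
open MonoidAlgebra

/-- Coefficient of a word in `X_j * f`. -/
lemma single_of_mul_apply {n : ℕ} (j : Fin n) (r : ℤ)
    (f : MonoidAlgebra ℤ (FreeMonoid (Fin n))) (is : List (Fin n)) :
    (MonoidAlgebra.single (FreeMonoid.of j) r * f).coeff (FreeMonoid.ofList is) =
      (match is with
        | [] => 0
        | i :: l => if i = j then r * f.coeff (FreeMonoid.ofList l) else 0) := by
  classical
  match is with
  | [] =>
    simp only
    refine MonoidAlgebra.coeff_single_mul_of_forall_mul_ne _ _ fun a h => ?_
    have h2 := congrArg FreeMonoid.toList h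
    simp at h2
  | i :: l =>
    have key : ∀ a : FreeMonoid (Fin n),
        (FreeMonoid.of j * a = FreeMonoid.ofList (i :: l)) ↔
          (i = j ∧ a = FreeMonoid.ofList l) := by
      intro a
      constructor
      · intro h
        have h2 := congrArg FreeMonoid.toList h
        simp only [FreeMonoid.toList_of_mul, FreeMonoid.toList_of,
          FreeMonoid.toList_ofList] at h2
        injection h2 with h3 h4
        exact ⟨h3.symm, FreeMonoid.toList.injective h4⟩
      · rintro ⟨rfl, rfl⟩
        rfl
    by_cases hij : i = j
    · subst hij
      simp only [if_pos rfl]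
      exact MonoidAlgebra.coeff_single_mul_eq_mul_coeff _ fun a _ => by simp only [key a, true_and]
    · simp only [if_neg hij]
      exact MonoidAlgebra.coeff_single_mul_of_forall_mul_ne _ _ fun a h => hij ((key a).mp h).1

lemma one_apply_word {n : ℕ} (is : List (Fin n)) :
    (1 : MonoidAlgebra ℤ (FreeMonoid (Fin n))).coeff (FreeMonoid.ofList is) =
      if is = [] then 1 else 0 := by
  classical
  rw [MonoidAlgebra.one_def, MonoidAlgebra.coeff_single, Finsupp.single_apply]
  congr 1
  simp only [eq_iff_iff]
  constructor
  · intro h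
    have h2 := congrArg FreeMonoid.toList h
    simpa using h2.symm
  · rintro rfl; rfl

/-- Iterated Fox derivatives at `1` compute Magnus expansion coefficients for
positive words: the coefficient of the basis word `X_{i₁} ⋯ X_{iᵣ}` in the Magnus
expansion `(1 + X_{j₁}) ⋯ (1 + X_{jₘ})` of the positive word `g = x_{j₁} ⋯ x_{jₘ}`
equals `δ_{i₁}…δ_{iᵣ}(g)(1)`. Here the free associative ℤ-algebra on `X₁, …, Xₙ`
is the monoid algebra of the free monoid on `n` letters, whose words form a ℤ-basis. -/
theorem magnus_expansion_coeff_eq_fox_derivative (n : ℕ)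
    (δ : Fin n → (GR n →ₗ[ℤ] GR n))
    (hδ₁ : ∀ i : Fin n, δ i (of ℤ (FG n) (FreeGroup.of i)) = 1)
    (hδ₂ : ∀ i j : Fin n, j ≠ i → δ i (of ℤ (FG n) (FreeGroup.of j)) = 0)
    (hδ₃ : ∀ (i : Fin n) (u v : FG n),
      δ i (of ℤ (FG n) (u * v)) =
        δ i (of ℤ (FG n) u) + of ℤ (FG n) u * δ i (of ℤ (FG n) v))
    (ε : GR n →+* ℤ)
    (hε : ∀ g : FG n, ε (of ℤ (FG n) g) = 1)
    (js : List (Fin n)) (is : List (Fin n)) :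
    ((js.map fun j =>
        (1 : MonoidAlgebra ℤ (FreeMonoid (Fin n))) +
          MonoidAlgebra.of ℤ (FreeMonoid (Fin n)) (FreeMonoid.of j)).prod).coeff
      (FreeMonoid.ofList is) =
    ε (foxIter δ is (of ℤ (FG n) ((js.map FreeGroup.of).prod))) := by
  classical
  -- δ of 1 is 0
  have hδone : ∀ i : Fin n, δ i 1 = 0 := by
    intro i
    have h := hδ₃ i 1 1
    rw [mul_one, map_one, one_mul] at h
    exact (left_eq_add.mp h)
  -- single g c = c • of g
  have hsingle : ∀ (g : FG n) (c : ℤ),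
      (MonoidAlgebra.single g c : GR n) = c • of ℤ (FG n) g := by
    intro g c
    rw [MonoidAlgebra.of_apply, MonoidAlgebra.smul_single', mul_one]
  -- ε of scalar multiples
  have hε2 : ∀ (c : ℤ) (x : GR n), ε (c • x) = c * ε x := by
    intro c x
    rw [zsmul_eq_mul, map_mul, map_intCast, Int.cast_id]
  -- ε of single
  have hεs : ∀ (g : FG n) (c : ℤ), ε (MonoidAlgebra.single g c : GR n) = c := by
    intro g c
    rw [hsingle, hε2, hε, mul_one]
  -- derived product rule
  have hD : ∀ (i : Fin n) (u : FG n) (w : GR n),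
      δ i (of ℤ (FG n) u * w) =
        ε w • δ i (of ℤ (FG n) u) + of ℤ (FG n) u * δ i w := by
    intro i u w
    induction w using MonoidAlgebra.induction with
    | zero => simp
    | single_add g c f hg hc ih =>
      rw [mul_add, map_add, map_add, map_add, ih, hsingle g c, hε2, hε, mul_one,
        mul_smul_comm, (δ i).map_smul, (δ i).map_smul, ← map_mul, hδ₃ i u g]
      rw [smul_add, add_smul, mul_add, mul_smul_comm]
      abel
  -- δ kills constants
  have hδc : ∀ (i : Fin n) (c : ℤ), δ i (c • (1 : GR n)) = 0 := by
    intro i c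
    rw [map_smul, hδone, smul_zero]
  -- key structural lemma
  have hM : ∀ (l : List (Fin n)) (i j : Fin n) (w : GR n),
      foxIter δ (i :: l) (of ℤ (FG n) (FreeGroup.of j) * w) =
        (if i = j then ε (foxIter δ l w) else 0) • (1 : GR n) +
          of ℤ (FG n) (FreeGroup.of j) * foxIter δ (i :: l) w := by
    intro l
    induction l with
    | nil =>
      intro i j w
      show δ i (of ℤ (FG n) (FreeGroup.of j) * w) = _
      rw [hD i (FreeGroup.of j) w]
      by_cases hij : i = j
      · subst hij
        rw [hδ₁ i, if_pos rfl]
        show ε w • (1 : GR n) + _ = _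
        rfl
      · rw [hδ₂ i j (fun h => hij h.symm), if_neg hij, smul_zero, zero_smul]
        rfl
    | cons i' l' ih =>
      intro i j w
      show δ i (foxIter δ (i' :: l') (of ℤ (FG n) (FreeGroup.of j) * w)) = _
      rw [ih i' j w, map_add, hδc, zero_add, hD i (FreeGroup.of j)]
      by_cases hij : i = j
      · subst hij
        rw [hδ₁ i, if_pos rfl]
        rfl
      · rw [hδ₂ i j (fun h => hij h.symm), if_neg hij, smul_zero, zero_smul, zero_add,
          zero_add]
        rfl
  -- foxIter of a nonempty list at 1 is 0
  have hZ : ∀ l : List (Fin n), l ≠ [] → foxIter δ l (1 : GR n) = 0 := by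
    intro l
    induction l with
    | nil => intro h; exact absurd rfl h
    | cons i l' ih =>
      intro _
      show δ i (foxIter δ l' 1) = 0
      match l' with
      | [] => exact hδone i
      | i'' :: l'' => rw [ih (by simp), map_zero]
  -- main induction
  induction js generalizing is with
  | nil =>
    simp only [List.map_nil, List.prod_nil, map_one]
    rw [one_apply_word]
    match is with
    | [] =>
      rw [if_pos rfl]
      exact (map_one ε).symm
    | i :: l =>
      rw [if_neg (by simp), hZ (i :: l) (by simp), map_zero]
  | cons j js' ih =>
    simp only [List.map_cons, List.prod_cons, map_mul]
    rw [add_mul, one_mul, MonoidAlgebra.coeff_add, Finsupp.add_apply]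
    have hof : (MonoidAlgebra.of ℤ (FreeMonoid (Fin n)) (FreeMonoid.of j)) =
        MonoidAlgebra.single (FreeMonoid.of j) (1 : ℤ) := rfl
    rw [hof, single_of_mul_apply]
    match is with
    | [] =>
      show _ + (0 : ℤ) = _
      rw [add_zero, ih []]
      show ε (of ℤ (FG n) ((js'.map FreeGroup.of).prod)) =
        ε (of ℤ (FG n) (FreeGroup.of j) * of ℤ (FG n) ((js'.map FreeGroup.of).prod))
      simp only [map_mul, hε, one_mul]
    | i :: l =>
      show _ + (if i = j then 1 * _ else 0) = _
      rw [hM l i j, map_add, map_mul, hε, one_mul, map_zsmul, map_one, smul_eq_mul,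
        mul_one, ih (i :: l), one_mul]
      by_cases hij : i = j
      · rw [if_pos hij, if_pos hij, ih l, add_comm]
      · rw [if_neg hij, if_neg hij, add_zero, zero_add]
end
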